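/- Let 0 < α < 1 and for each integer l ≤ 0 define, for f ∈ L²_α[0,1], the operator (T_l f)(s) = −(Σ_{n=0}^{−l} s^{2n}) ∫₀^s (r/s)^{1−l} f(r) dr + (1/(1 − s²)) ∫_s^1 (r s)^{1−l} f(r) dr for s ∈ (0,1). Then each T_l is bounded on L²_α[0,1] and ‖T_l‖ ≤ 8/α², uniformly in l. -/

import Mathlib

open MeasureTheory Real Set ENNReal NNReal


/-- Upper bound for a set lintegral of a nonnegative derivative on an open interval,
without any integrability hypothesis near the endpoints. -/
lemma lint_le {a b M : ℝ} (hab : a < b) (F h : ℝ → ℝ)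
    (hmeas : Measurable h)
    (hder : ∀ x ∈ Ioo a b, HasDerivAt F (h x) x)
    (hcont : ContinuousOn h (Ioo a b))
    (hpos : ∀ x ∈ Ioo a b, 0 ≤ h x)
    (hM : ∀ x ∈ Ioo a b, ∀ y ∈ Ioo a b, F y - F x ≤ M) :
    ∫⁻ x in Ioo a b, ENNReal.ofReal (h x) ≤ ENNReal.ofReal M := by
  set c : ℝ := (a + b) / 2 with hc
  have hac : a < c := by simp [hc]; linarith
  have hcb : c < b := by simp [hc]; linarith
  set u : ℕ → ℝ := fun n => a + (c - a) / (n + 1) with hu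
  set v : ℕ → ℝ := fun n => b - (b - c) / (n + 1) with hv
  have hca : (0:ℝ) < c - a := by linarith
  have hbc : (0:ℝ) < b - c := by linarith
  have hn1 : ∀ n : ℕ, (0:ℝ) < (n:ℝ) + 1 := fun n => by positivity
  have hsub : ∀ n, Icc (u n) (v n) ⊆ Ioo a b := by
    intro n x hx
    have h1 : a < u n := by
      have : 0 < (c - a) / (n + 1) := by positivity
      simp only [hu]; linarith
    have h2 : v n < b := by
      have : 0 < (b - c) / (n + 1) := by positivity
      simp only [hv]; linarith
    exact ⟨lt_of_lt_of_le h1 hx.1, lt_of_le_of_lt hx.2 h2⟩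
  have huv : ∀ n, u n ≤ v n := by
    intro n
    have h1 : (c - a) / (n + 1) ≤ c - a := by
      rw [div_le_iff₀ (hn1 n)]; nlinarith [hn1 n]
    have h2 : (b - c) / (n + 1) ≤ b - c := by
      rw [div_le_iff₀ (hn1 n)]; nlinarith [hn1 n]
    simp only [hu, hv]; linarith
  -- monotone family of sets
  have humono : ∀ m n : ℕ, m ≤ n → Icc (u m) (v m) ⊆ Icc (u n) (v n) := by
    intro m n hmn
    apply Icc_subset_Icc
    · simp only [hu]
      have : (c - a) / (n + 1) ≤ (c - a) / (m + 1) :=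
        div_le_div_of_nonneg_left hca.le (hn1 m) (by have := (Nat.cast_le (α := ℝ)).mpr hmn; linarith)
      linarith
    · simp only [hv]
      have : (b - c) / (n + 1) ≤ (b - c) / (m + 1) :=
        div_le_div_of_nonneg_left hbc.le (hn1 m) (by have := (Nat.cast_le (α := ℝ)).mpr hmn; linarith)
      linarith
  have hcover : ∀ x ∈ Ioo a b, ∃ n : ℕ, x ∈ Icc (u n) (v n) := by
    intro x hx
    obtain ⟨n₁, hn₁⟩ := exists_nat_ge ((c - a) / (x - a))
    obtain ⟨n₂, hn₂⟩ := exists_nat_ge ((b - c) / (b - x))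
    refine ⟨max n₁ n₂, ?_, ?_⟩
    · have hxa : (0:ℝ) < x - a := by linarith [hx.1]
      have h1 : (c - a) / (x - a) ≤ (n₁:ℝ) + 1 := by linarith
      have h2 : c - a ≤ ((n₁:ℝ) + 1) * (x - a) := by
        rw [div_le_iff₀ hxa] at h1; linarith
      have hle : ((n₁:ℝ) + 1) ≤ ((max n₁ n₂ : ℕ) : ℝ) + 1 := by
        have := (Nat.cast_le (α := ℝ)).mpr (le_max_left n₁ n₂); linarith
      have : (c - a) / (((max n₁ n₂ : ℕ):ℝ) + 1) ≤ x - a := by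
        rw [div_le_iff₀ (hn1 _)]
        nlinarith [h2, hle, hxa]
      simp only [hu]; linarith
    · have hxb : (0:ℝ) < b - x := by linarith [hx.2]
      have h1 : (b - c) / (b - x) ≤ (n₂:ℝ) + 1 := by linarith
      have h2 : b - c ≤ ((n₂:ℝ) + 1) * (b - x) := by
        rw [div_le_iff₀ hxb] at h1; linarith
      have hle : ((n₂:ℝ) + 1) ≤ ((max n₁ n₂ : ℕ) : ℝ) + 1 := by
        have := (Nat.cast_le (α := ℝ)).mpr (le_max_right n₁ n₂); linarith
      have : (b - c) / (((max n₁ n₂ : ℕ):ℝ) + 1) ≤ b - x := by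
        rw [div_le_iff₀ (hn1 _)]
        nlinarith [h2, hle, hxb]
      simp only [hv]; linarith
  -- each compact piece is bounded by M via FTC
  have hpiece : ∀ n : ℕ, ∫⁻ x in Icc (u n) (v n), ENNReal.ofReal (h x) ≤ ENNReal.ofReal M := by
    intro n
    have hIcc : Icc (u n) (v n) ⊆ Ioo a b := hsub n
    have hcont' : ContinuousOn h (Icc (u n) (v n)) := hcont.mono hIcc
    have hint : IntegrableOn h (Icc (u n) (v n)) volume :=
      hcont'.integrableOn_compact isCompact_Icc
    have heq : ∫⁻ x in Icc (u n) (v n), ENNReal.ofReal (h x)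
        = ENNReal.ofReal (∫ x in Icc (u n) (v n), h x) := by
      rw [← ofReal_integral_eq_lintegral_ofReal hint]
      exact (ae_restrict_of_forall_mem measurableSet_Icc
        (fun x hx => hpos x (hIcc hx)) : _)
    rw [heq]
    apply ENNReal.ofReal_le_ofReal
    have hftc : ∫ x in (u n)..(v n), h x = F (v n) - F (u n) := by
      apply intervalIntegral.integral_eq_sub_of_hasDerivAt
      · intro x hx
        rw [uIcc_of_le (huv n)] at hx
        exact hder x (hIcc hx)
      · exact (intervalIntegrable_iff_integrableOn_Icc_of_le (huv n)).mpr hint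
    have : ∫ x in Icc (u n) (v n), h x = ∫ x in (u n)..(v n), h x := by
      rw [intervalIntegral.integral_of_le (huv n),
        setIntegral_congr_set Ioc_ae_eq_Icc.symm]
    rw [this, hftc]
    have hu' : u n ∈ Ioo a b := hIcc ⟨le_refl _, huv n⟩
    have hv' : v n ∈ Ioo a b := hIcc ⟨huv n, le_refl _⟩
    exact hM (u n) hu' (v n) hv'
  -- monotone convergence
  have hind : ∀ n : ℕ, Measurable ((Icc (u n) (v n)).indicator
      (fun x => ENNReal.ofReal (h x))) :=
    fun n => (hmeas.ennreal_ofReal).indicator measurableSet_Icc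
  have hmono : Monotone (fun n : ℕ => (Icc (u n) (v n)).indicator
      (fun x => ENNReal.ofReal (h x))) := by
    intro m n hmn x
    exact indicator_le_indicator_of_subset (humono m n hmn) (fun _ => zero_le) x
  have hsup : (fun x => ⨆ n : ℕ, (Icc (u n) (v n)).indicator
      (fun x => ENNReal.ofReal (h x)) x)
      = (Ioo a b).indicator (fun x => ENNReal.ofReal (h x)) := by
    funext x
    by_cases hx : x ∈ Ioo a b
    · obtain ⟨n, hn⟩ := hcover x hx
      apply le_antisymm
      · apply iSup_le; intro m
        by_cases hxm : x ∈ Icc (u m) (v m)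
        · rw [indicator_of_mem hxm, indicator_of_mem hx]
        · rw [indicator_of_notMem hxm]; exact zero_le
      · rw [indicator_of_mem hx]
        exact le_trans (le_of_eq (indicator_of_mem hn
          (fun x => ENNReal.ofReal (h x))).symm)
          (le_iSup (fun m => (Icc (u m) (v m)).indicator
            (fun x => ENNReal.ofReal (h x)) x) n)
    · rw [indicator_of_notMem hx]
      apply le_antisymm _ zero_le
      apply iSup_le; intro m
      rw [indicator_of_notMem (fun hxm => hx (hsub m hxm))]
  calc ∫⁻ x in Ioo a b, ENNReal.ofReal (h x)
      = ∫⁻ x, (Ioo a b).indicator (fun x => ENNReal.ofReal (h x)) x :=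
        (lintegral_indicator measurableSet_Ioo _).symm
    _ = ⨆ n : ℕ, ∫⁻ x, (Icc (u n) (v n)).indicator (fun x => ENNReal.ofReal (h x)) x := by
        rw [← lintegral_iSup hind hmono, hsup]
    _ ≤ ENNReal.ofReal M := by
        apply iSup_le; intro n
        exact le_trans (le_of_eq (lintegral_indicator measurableSet_Icc _)) (hpiece n)

lemma hda (p : ℝ) (x : ℝ) (hx : 1 - x^2 ≠ 0) :
    HasDerivAt (fun y : ℝ => (1 - y^2) ^ p) (p * (1-x^2)^(p-1) * (-2*x)) x := by
  have h1 : HasDerivAt (fun y : ℝ => 1 - y^2) (-2*x) x := by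
    have := (hasDerivAt_pow 2 x).const_sub 1
    exact this.congr_deriv (by simp)
  have := h1.rpow_const (p := p) (Or.inl hx)
  convert this using 1
  ring

lemma hdb (p : ℝ) (x : ℝ) (hx : 1 - x ≠ 0) :
    HasDerivAt (fun y : ℝ => (1 - y) ^ p) (p * (1-x)^(p-1) * (-1)) x := by
  have h1 : HasDerivAt (fun y : ℝ => 1 - y) (-1) x := by
    simpa using (hasDerivAt_id x).const_sub 1
  have := h1.rpow_const (p := p) (Or.inl hx)
  convert this using 1
  ring

lemma rpow_cont (p : ℝ) (a b : ℝ) (h : ∀ x ∈ Ioo a b, 1 - x^2 ≠ 0) :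
    ContinuousOn (fun x : ℝ => (1 - x^2) ^ p) (Ioo a b) := by
  intro x hx
  have hb : Continuous fun y : ℝ => 1 - y^2 := by fun_prop
  exact (hb.continuousAt.rpow_const (Or.inl (h x hx))).continuousWithinAt

/-- The operator `T_l`, `l ≤ 0`, of the radial decomposition:
`(T_l f)(s) = -(Σ_{n=0}^{-l} s^{2n}) ∫₀^s (r/s)^{1-l} f(r) dr
              + (1/(1-s²)) ∫_s^1 (rs)^{1-l} f(r) dr`. -/
noncomputable def Tl (l : ℤ) (f : ℝ → ℂ) (s : ℝ) : ℂ :=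
  -(((∑ n ∈ Finset.range ((-l).toNat + 1), s ^ (2 * n) : ℝ) : ℂ) *
      ∫ r in Ioo (0:ℝ) s, (((r / s) ^ (1 - l) : ℝ) : ℂ) * f r) +
    ((1 / (1 - s^2) : ℝ) : ℂ) * ∫ r in Ioo s (1:ℝ), (((r * s) ^ (1 - l) : ℝ) : ℂ) * f r

noncomputable def ker (s r : ℝ) : ℝ≥0∞ :=
  if r ≤ s then ENNReal.ofReal (2*r/(s*(1-r^2))) else ENNReal.ofReal (r*s/(1-s^2))

lemma kerbound1 (m : ℕ) (r s : ℝ) (hr : 0 < r) (hrs : r ≤ s) (hs : s < 1) (hs0 : 0 < s) :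
    (∑ n ∈ Finset.range (m+1), s^(2*n)) * (r/s)^(m+1) ≤ 2*r/(s*(1-r^2)) := by
  set S : ℝ := ∑ n ∈ Finset.range (m+1), (r*s)^n with hSdef
  have hrs0 : 0 ≤ r * s := by positivity
  have hrs1 : r * s < 1 := by nlinarith
  have hSnn : 0 ≤ S := Finset.sum_nonneg fun n _ => pow_nonneg hrs0 n
  have hS : S * (1 - r*s) ≤ 1 := by
    have hg := geom_sum_mul (r*s) (m+1)
    have hp : 0 ≤ (r*s)^(m+1) := pow_nonneg hrs0 _
    nlinarith [hg]
  -- termwise bound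
  have h1 : ∀ n ∈ Finset.range (m+1), s^(2*n) * (r/s)^(m+1) ≤ (r/s) * (r*s)^n := by
    intro n hn
    have hnm : n ≤ m := Nat.lt_succ_iff.mp (Finset.mem_range.mp hn)
    obtain ⟨k, hk⟩ := Nat.exists_eq_add_of_le hnm
    have e1 : s^(2*n) * (r/s)^n = (r*s)^n := by
      rw [pow_mul, ← mul_pow]
      congr 1
      field_simp
    have hq0 : 0 ≤ r / s := by positivity
    have hq1 : r / s ≤ 1 := div_le_one_of_le₀ hrs hs0.le
    calc s^(2*n) * (r/s)^(m+1)
        = (s^(2*n) * (r/s)^n) * (r/s)^k * (r/s) := by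
          rw [hk, show n + k + 1 = n + (k + 1) by ring, pow_add, pow_succ]; ring
      _ = (r*s)^n * (r/s)^k * (r/s) := by rw [e1]
      _ ≤ (r*s)^n * 1 * (r/s) := by
          apply mul_le_mul_of_nonneg_right _ hq0
          apply mul_le_mul_of_nonneg_left (pow_le_one₀ hq0 hq1) (pow_nonneg hrs0 n)
      _ = (r/s) * (r*s)^n := by ring
  have h2 : (∑ n ∈ Finset.range (m+1), s^(2*n)) * (r/s)^(m+1) ≤ (r/s) * S := by
    rw [Finset.sum_mul, hSdef, Finset.mul_sum]
    exact Finset.sum_le_sum h1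
  refine h2.trans ?_
  have h212 : 1 - r^2 ≤ 2*(1 - r*s) := by nlinarith
  have hS2 : S * (1 - r^2) ≤ 2 := by nlinarith [mul_le_mul_of_nonneg_left h212 hSnn]
  rw [div_mul_eq_mul_div, div_le_div_iff₀ hs0 (by nlinarith : (0:ℝ) < s*(1-r^2))]
  nlinarith [mul_le_mul_of_nonneg_left hS2 (mul_pos hr hs0).le]

lemma step1 (l : ℤ) (hl : l ≤ 0) (f : ℝ → ℂ) (s : ℝ) (hs : s ∈ Ioo (0:ℝ) 1) :
    (‖Tl l f s‖₊ : ℝ≥0∞) ≤ ∫⁻ r in Ioo (0:ℝ) 1, ker s r * ‖f r‖₊ := by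
  obtain ⟨hs0, hs1⟩ := hs
  set m : ℕ := (-l).toNat with hm
  have hml : (1 : ℤ) - l = ((m+1 : ℕ) : ℤ) := by
    have : ((-l).toNat : ℤ) = -l := Int.toNat_of_nonneg (by omega)
    push_cast
    omega
  set c : ℝ := ∑ n ∈ Finset.range (m+1), s^(2*n) with hcdef
  set d : ℝ := 1/(1-s^2) with hddef
  have hs2 : (0:ℝ) < 1 - s^2 := by nlinarith
  have hc0 : 0 ≤ c := Finset.sum_nonneg fun n _ => pow_nonneg hs0.le _
  have hd0 : 0 ≤ d := by positivity
  set I₁ : ℂ := ∫ r in Ioo (0:ℝ) s, (((r / s) ^ (1 - l) : ℝ) : ℂ) * f r with hI1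
  set I₂ : ℂ := ∫ r in Ioo s (1:ℝ), (((r * s) ^ (1 - l) : ℝ) : ℂ) * f r with hI2
  have htri : (‖Tl l f s‖₊ : ℝ≥0∞) ≤
      (‖((c:ℝ):ℂ) * I₁‖₊ : ℝ≥0∞) + (‖((d:ℝ):ℂ) * I₂‖₊ : ℝ≥0∞) := by
    have : ‖Tl l f s‖₊ ≤ ‖((c:ℝ):ℂ) * I₁‖₊ + ‖((d:ℝ):ℂ) * I₂‖₊ := by
      rw [Tl]
      refine (nnnorm_add_le _ _).trans ?_
      rw [nnnorm_neg]
    exact_mod_cast this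
  have hterm1 : (‖((c:ℝ):ℂ) * I₁‖₊ : ℝ≥0∞) ≤ ∫⁻ r in Ioo (0:ℝ) s, ker s r * ‖f r‖₊ := by
    have h1 : (‖((c:ℝ):ℂ) * I₁‖₊ : ℝ≥0∞)
        = ENNReal.ofReal c * (‖I₁‖₊ : ℝ≥0∞) := by
      rw [nnnorm_mul, ENNReal.coe_mul, Complex.nnnorm_real, ← enorm_eq_nnnorm, Real.enorm_eq_ofReal hc0]
    rw [h1]
    have h2 : (‖I₁‖₊ : ℝ≥0∞) ≤
        ∫⁻ r in Ioo (0:ℝ) s, (‖(((r / s) ^ (1 - l) : ℝ) : ℂ) * f r‖₊ : ℝ≥0∞) :=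
      enorm_integral_le_lintegral_enorm _
    refine le_trans (mul_le_mul_right h2 _) ?_
    rw [← lintegral_const_mul' _ _ ENNReal.ofReal_ne_top]
    refine setLIntegral_mono' measurableSet_Ioo ?_
    intro r hr
    obtain ⟨hr0, hrs⟩ := hr
    have hpow : ((r / s) ^ (1 - l) : ℝ) = (r/s)^(m+1 : ℕ) := by
      rw [hml, zpow_natCast]
    have hpow0 : (0:ℝ) ≤ (r/s)^(m+1 : ℕ) := by positivity
    rw [nnnorm_mul, ENNReal.coe_mul, Complex.nnnorm_real, hpow,
      ← enorm_eq_nnnorm, Real.enorm_eq_ofReal hpow0, ← mul_assoc, ← ENNReal.ofReal_mul hc0]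
    have hker : ker s r = ENNReal.ofReal (2*r/(s*(1-r^2))) := if_pos hrs.le
    rw [hker]
    exact mul_le_mul_left (ENNReal.ofReal_le_ofReal
      (kerbound1 m r s hr0 hrs.le hs1 hs0)) _
  have hterm2 : (‖((d:ℝ):ℂ) * I₂‖₊ : ℝ≥0∞) ≤ ∫⁻ r in Ioo s (1:ℝ), ker s r * ‖f r‖₊ := by
    have h1 : (‖((d:ℝ):ℂ) * I₂‖₊ : ℝ≥0∞)
        = ENNReal.ofReal d * (‖I₂‖₊ : ℝ≥0∞) := by
      rw [nnnorm_mul, ENNReal.coe_mul, Complex.nnnorm_real, ← enorm_eq_nnnorm, Real.enorm_eq_ofReal hd0]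
    rw [h1]
    have h2 : (‖I₂‖₊ : ℝ≥0∞) ≤
        ∫⁻ r in Ioo s (1:ℝ), (‖(((r * s) ^ (1 - l) : ℝ) : ℂ) * f r‖₊ : ℝ≥0∞) :=
      enorm_integral_le_lintegral_enorm _
    refine le_trans (mul_le_mul_right h2 _) ?_
    rw [← lintegral_const_mul' _ _ ENNReal.ofReal_ne_top]
    refine setLIntegral_mono' measurableSet_Ioo ?_
    intro r hr
    obtain ⟨hrs, hr1⟩ := hr
    have hr0 : 0 < r := hs0.trans hrs
    have hpow : ((r * s) ^ (1 - l) : ℝ) = (r*s)^(m+1 : ℕ) := by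
      rw [hml, zpow_natCast]
    have hpow0 : (0:ℝ) ≤ (r*s)^(m+1 : ℕ) := by positivity
    rw [nnnorm_mul, ENNReal.coe_mul, Complex.nnnorm_real, hpow,
      ← enorm_eq_nnnorm, Real.enorm_eq_ofReal hpow0, ← mul_assoc, ← ENNReal.ofReal_mul hd0]
    have hker : ker s r = ENNReal.ofReal (r*s/(1-s^2)) := if_neg (not_le.mpr hrs)
    rw [hker]
    refine mul_le_mul_left (ENNReal.ofReal_le_ofReal ?_) _
    have hrs0 : (0:ℝ) ≤ r*s := by positivity
    have hrs1 : r*s ≤ 1 := by nlinarith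
    have : (r*s)^(m+1 : ℕ) ≤ (r*s)^(1 : ℕ) :=
      pow_le_pow_of_le_one hrs0 hrs1 (by omega)
    rw [pow_one] at this
    rw [hddef]
    calc 1/(1-s^2) * (r*s)^(m+1 : ℕ) ≤ 1/(1-s^2) * (r*s) := by
          exact mul_le_mul_of_nonneg_left this (by positivity)
      _ = r*s/(1-s^2) := by ring
  refine htri.trans ?_
  refine le_trans (add_le_add hterm1 hterm2) ?_
  have hdisj : Disjoint (Ioo (0:ℝ) s) (Ioo s 1) := by
    rw [Set.disjoint_left]
    rintro x ⟨_, h1⟩ ⟨h2, _⟩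
    linarith
  rw [← lintegral_union measurableSet_Ioo hdisj]
  exact lintegral_mono_set (by
    rintro x (⟨h1, h2⟩ | ⟨h1, h2⟩) <;> exact ⟨by linarith, by linarith⟩)

set_option maxHeartbeats 2000000 in
lemma cond1 (α : ℝ) (hα0 : 0 < α) (hα1 : α < 1) (s : ℝ) (hs : s ∈ Ioo (0:ℝ) 1) :
    ∫⁻ r in Ioo (0:ℝ) 1, ker s r * ENNReal.ofReal ((1-r^2) ^ (α/2-1)) ≤
      ENNReal.ofReal ((3/α) * (1-s^2) ^ (α/2-1)) := by
  obtain ⟨hs0, hs1⟩ := hs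
  have hs2 : (0:ℝ) < 1 - s^2 := by nlinarith
  have hβ : (0:ℝ) < 1 - α/2 := by linarith
  have hsplit : Ioo (0:ℝ) 1 = Ioo 0 s ∪ Ico s 1 := by
    ext x
    simp only [mem_Ioo, mem_union, mem_Ico]
    constructor
    · rintro ⟨h1, h2⟩
      rcases lt_or_ge x s with h | h
      · exact Or.inl ⟨h1, h⟩
      · exact Or.inr ⟨h, h2⟩
    · rintro (⟨h1, h2⟩ | ⟨h1, h2⟩) <;> constructor <;> linarith
  have hdisj : Disjoint (Ioo (0:ℝ) s) (Ico s 1) := by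
    rw [Set.disjoint_left]
    rintro x ⟨_, h1⟩ ⟨h2, _⟩
    linarith
  rw [hsplit, lintegral_union measurableSet_Ico hdisj]
  have hA : ∫⁻ r in Ioo (0:ℝ) s, ker s r * ENNReal.ofReal ((1-r^2) ^ (α/2-1)) ≤
      ENNReal.ofReal (2 * (1-s^2) ^ (α/2-1)) := by
    rw [setLIntegral_congr_fun_ae measurableSet_Ioo (ae_of_all _ (fun r hr => ?_))
      (g := fun r => ENNReal.ofReal ((2/s) * (r * (1-r^2)^(α/2-2))))]
    swap
    · obtain ⟨hr0, hrs⟩ := hr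
      have hr2 : (0:ℝ) < 1 - r^2 := by nlinarith
      rw [ker, if_pos hrs.le, ← ENNReal.ofReal_mul
        (div_nonneg (by linarith) (by positivity))]
      congr 1
      rw [show (α/2-1 : ℝ) = (α/2-2) + 1 by ring, Real.rpow_add_one hr2.ne']
      field_simp
    · apply lint_le hs0 (fun r => (1-r^2)^(α/2-1) / (s*(1-α/2)))
      · fun_prop
      · intro x hx
        obtain ⟨hx0, hxs⟩ := hx
        have hx2 : (0:ℝ) < 1 - x^2 := by nlinarith
        have hthis := (hda (α/2-1) x hx2.ne').div_const (s*(1-α/2))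
        rw [show (α/2-1-1 : ℝ) = α/2-2 by ring] at hthis
        have hc : (0:ℝ) < s*(1-α/2) := by positivity
        have heq : (α/2-1) * (1-x^2)^(α/2-2) * (-2*x) / (s*(1-α/2))
            = 2/s*(x*(1-x^2)^(α/2-2)) := by
          rw [div_eq_iff hc.ne']
          field_simp
          ring
        exact heq ▸ hthis
      · intro x hx
        have hx2 : ∀ y ∈ Ioo (0:ℝ) s, 1 - y^2 ≠ 0 := by
          intro y hy; nlinarith [hy.1, hy.2]
        exact (continuousOn_const.mul ((continuousOn_id.mul
          (rpow_cont (α/2-2) 0 s hx2))) ) x hx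
      · intro x hx
        have hx2 : (0:ℝ) < 1 - x^2 := by nlinarith [hx.1, hx.2]
        exact mul_nonneg (div_nonneg (by linarith) hs0.le)
          (mul_nonneg hx.1.le (Real.rpow_pos_of_pos hx2 (α/2-2)).le)
      · intro x hx y hy
        obtain ⟨hx0, hxs⟩ := hx
        obtain ⟨hy0, hys⟩ := hy
        have hx2 : (0:ℝ) < 1 - x^2 := by nlinarith
        have hy2 : (0:ℝ) < 1 - y^2 := by nlinarith
        have hc : (0:ℝ) < s*(1-α/2) := by positivity
        rw [div_sub_div_same, div_le_iff₀ hc]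
        have h1 : (1-y^2)^(α/2-1) ≤ (1-s^2)^(α/2-1) :=
          Real.rpow_le_rpow_of_nonpos hs2 (by nlinarith) (by linarith)
        have h2 : (1:ℝ) ≤ (1-x^2)^(α/2-1) :=
          Real.one_le_rpow_of_pos_of_le_one_of_nonpos hx2 (by nlinarith) (by linarith)
        have h3 : (1-s^2) * (1-s^2)^(α/2-1) = (1-s^2)^(α/2) := by
          have h := Real.rpow_add_one hs2.ne' (α/2-1)
          rw [show (α/2-1+1 : ℝ) = α/2 by ring] at h
          rw [h]; ring
        have h4 : (1-s^2)^(α/2) ≤ 1 := Real.rpow_le_one hs2.le (by nlinarith) (by positivity)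
        have h5 : (0:ℝ) < (1-s^2)^(α/2-1) := Real.rpow_pos_of_pos hs2 _
        nlinarith [mul_le_mul_of_nonneg_left (show s ≤ 2-α by linarith)
          (mul_nonneg hs0.le h5.le)]
  have hB : ∫⁻ r in Ico s (1:ℝ), ker s r * ENNReal.ofReal ((1-r^2) ^ (α/2-1)) ≤
      ENNReal.ofReal ((1/α) * (1-s^2) ^ (α/2-1)) := by
    rw [setLIntegral_congr (Ioo_ae_eq_Ico (a := s) (b := (1:ℝ))).symm]
    rw [setLIntegral_congr_fun_ae measurableSet_Ioo (ae_of_all _ (fun r hr => ?_))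
      (g := fun r => ENNReal.ofReal ((s/(1-s^2)) * (r * (1-r^2)^(α/2-1))))]
    swap
    · obtain ⟨hrs, hr1⟩ := hr
      have hr0 : 0 < r := hs0.trans hrs
      rw [ker, if_neg (not_le.mpr hrs), ← ENNReal.ofReal_mul
        (div_nonneg (by positivity) hs2.le)]
      congr 1
      ring
    · apply lint_le hs1 (fun r => -((s/(1-s^2)) * (1-r^2)^(α/2)) / α)
      · fun_prop
      · intro x hx
        obtain ⟨hxs, hx1⟩ := hx
        have hx0 : 0 < x := hs0.trans hxs
        have hx2 : (0:ℝ) < 1 - x^2 := by nlinarith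
        have hthis := (((hda (α/2) x hx2.ne').const_mul (s/(1-s^2))).neg).div_const α
        have heq : -((s/(1-s^2)) * ((α/2) * (1-x^2)^(α/2-1) * (-2*x))) / α
            = s/(1-s^2)*(x*(1-x^2)^(α/2-1)) := by
          rw [div_eq_iff hα0.ne']
          field_simp
        exact heq ▸ hthis
      · intro x hx
        have hx2 : ∀ y ∈ Ioo s (1:ℝ), 1 - y^2 ≠ 0 := by
          intro y hy; nlinarith [hy.1, hy.2]
        exact (continuousOn_const.mul ((continuousOn_id.mul
          (rpow_cont (α/2-1) s 1 hx2))) ) x hx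
      · intro x hx
        have hx2 : (0:ℝ) < 1 - x^2 := by nlinarith [hx.1, hx.2]
        have hx0 : 0 < x := hs0.trans hx.1
        exact mul_nonneg (div_nonneg hs0.le hs2.le)
          (mul_nonneg hx0.le (Real.rpow_pos_of_pos hx2 (α/2-1)).le)
      · intro x hx y hy
        obtain ⟨hxs, hx1⟩ := hx
        obtain ⟨hys, hy1⟩ := hy
        have hx2 : (0:ℝ) < 1 - x^2 := by nlinarith
        have hy2 : (0:ℝ) < 1 - y^2 := by nlinarith
        have h1 : (1-x^2)^(α/2) ≤ (1-s^2)^(α/2) :=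
          Real.rpow_le_rpow hx2.le (by nlinarith) (by positivity)
        have h2 : (0:ℝ) ≤ (1-y^2)^(α/2) := (Real.rpow_pos_of_pos hy2 _).le
        have h3 : (s/(1-s^2)) * (1-s^2)^(α/2) = s * (1-s^2)^(α/2-1) := by
          have h := Real.rpow_add_one hs2.ne' (α/2-1)
          rw [show (α/2-1+1 : ℝ) = α/2 by ring] at h
          rw [h]
          field_simp
        have h5 : (0:ℝ) < (1-s^2)^(α/2-1) := Real.rpow_pos_of_pos hs2 _
        have hc : (0:ℝ) < s/(1-s^2) := by positivity
        rw [div_sub_div_same, div_le_iff₀ hα0]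
        have key : -((s/(1-s^2)) * (1-y^2)^(α/2)) - -((s/(1-s^2)) * (1-x^2)^(α/2))
            ≤ (s/(1-s^2)) * (1-s^2)^(α/2) := by nlinarith
        calc -((s/(1-s^2)) * (1-y^2)^(α/2)) - -((s/(1-s^2)) * (1-x^2)^(α/2))
            ≤ (s/(1-s^2)) * (1-s^2)^(α/2) := key
          _ = s * (1-s^2)^(α/2-1) := h3
          _ ≤ 1/α * (1-s^2)^(α/2-1) * α := by
              have he : 1/α * (1-s^2)^(α/2-1) * α = (1-s^2)^(α/2-1) := by
                field_simp
              rw [he]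
              nlinarith
  refine le_trans (add_le_add hA hB) ?_
  rw [← ENNReal.ofReal_add (by positivity) (by positivity)]
  apply ENNReal.ofReal_le_ofReal
  have h5 : (0:ℝ) < (1-s^2)^(α/2-1) := Real.rpow_pos_of_pos hs2 _
  have h6 : (2 + 1/α) ≤ 3/α := by
    rw [le_div_iff₀ hα0]
    have : (2 + 1/α)*α = 2*α + 1 := by field_simp
    rw [this]; linarith
  nlinarith [mul_le_mul_of_nonneg_right h6 h5.le]

set_option maxHeartbeats 2000000 in
lemma cond2 (α : ℝ) (hα0 : 0 < α) (hα1 : α < 1) (r : ℝ) (hr : r ∈ Ioo (0:ℝ) 1) :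
    ∫⁻ s in Ioo (0:ℝ) 1, ker s r * ENNReal.ofReal ((1-s^2) ^ (α/2-1)) *
        ENNReal.ofReal ((1-s^2) ^ (1-α) * s) ≤
      ENNReal.ofReal ((5/α) * (r * (1-r^2) ^ (-(α/2)))) := by
  obtain ⟨hr0, hr1⟩ := hr
  have hr2 : (0:ℝ) < 1 - r^2 := by nlinarith
  have hβ : (0:ℝ) < 1 - α/2 := by linarith
  have hsplit : Ioo (0:ℝ) 1 = Ioo 0 r ∪ Ico r 1 := by
    ext x
    simp only [mem_Ioo, mem_union, mem_Ico]
    constructor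
    · rintro ⟨h1, h2⟩
      rcases lt_or_ge x r with h | h
      · exact Or.inl ⟨h1, h⟩
      · exact Or.inr ⟨h, h2⟩
    · rintro (⟨h1, h2⟩ | ⟨h1, h2⟩) <;> constructor <;> linarith
  have hdisj : Disjoint (Ioo (0:ℝ) r) (Ico r 1) := by
    rw [Set.disjoint_left]
    rintro x ⟨_, h1⟩ ⟨h2, _⟩
    linarith
  rw [hsplit, lintegral_union measurableSet_Ico hdisj]
  have hA : ∫⁻ s in Ioo (0:ℝ) r, ker s r * ENNReal.ofReal ((1-s^2) ^ (α/2-1)) *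
        ENNReal.ofReal ((1-s^2) ^ (1-α) * s) ≤
      ENNReal.ofReal ((1/α) * (r * (1-r^2) ^ (-(α/2)))) := by
    rw [setLIntegral_congr_fun_ae measurableSet_Ioo (ae_of_all _ (fun s hs => ?_))
      (g := fun s => ENNReal.ofReal (r * (s^2 * (1-s^2)^(-(α/2)-1))))]
    swap
    · obtain ⟨hs0, hsr⟩ := hs
      have hs2 : (0:ℝ) < 1 - s^2 := by nlinarith
      rw [ker, if_neg (not_le.mpr hsr), ← ENNReal.ofReal_mul
        (div_nonneg (by positivity) hs2.le), ← ENNReal.ofReal_mul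
        (mul_nonneg (div_nonneg (by positivity) hs2.le)
          (Real.rpow_pos_of_pos hs2 _).le)]
      congr 1
      have e1 : (1-s^2)^(α/2-1) * (1-s^2)^(1-α) = (1-s^2)^(-(α/2)) := by
        rw [← Real.rpow_add hs2]
        congr 1
        ring
      have e2 : (1-s^2)^(-(α/2)) = (1-s^2)^(-(α/2)-1) * (1-s^2) := by
        have h := Real.rpow_add_one hs2.ne' (-(α/2)-1)
        rw [show (-(α/2)-1+1 : ℝ) = -(α/2) by ring] at h
        exact h
      calc r*s/(1-s^2) * (1-s^2)^(α/2-1) * ((1-s^2)^(1-α) * s)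
          = r*s^2/(1-s^2) * ((1-s^2)^(α/2-1) * (1-s^2)^(1-α)) := by ring
        _ = r*s^2/(1-s^2) * ((1-s^2)^(-(α/2)-1) * (1-s^2)) := by rw [e1, e2]
        _ = r * (s^2 * (1-s^2)^(-(α/2)-1)) := by field_simp
    · refine le_trans (setLIntegral_mono' measurableSet_Ioo
        (fun s hs => ENNReal.ofReal_le_ofReal ?_)
        (g := fun s => ENNReal.ofReal (r * (s * (1-s^2)^(-(α/2)-1))))) ?_
      · obtain ⟨hs0, hsr⟩ := hs
        have hs2 : (0:ℝ) < 1 - s^2 := by nlinarith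
        have hss : s^2 ≤ s := by nlinarith
        exact mul_le_mul_of_nonneg_left (mul_le_mul_of_nonneg_right hss
          (Real.rpow_pos_of_pos hs2 _).le) hr0.le
      · apply lint_le hr0 (fun s => (r/α) * (1-s^2)^(-(α/2)))
        · fun_prop
        · intro x hx
          obtain ⟨hx0, hxr⟩ := hx
          have hx2 : (0:ℝ) < 1 - x^2 := by nlinarith
          have hthis := (hda (-(α/2)) x hx2.ne').const_mul (r/α)
          rw [show (-(α/2)-1 : ℝ) = -(α/2)-1 by ring] at hthis
          have heq : r/α * (-(α/2) * (1-x^2)^(-(α/2)-1) * (-2*x))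
              = r * (x * (1-x^2)^(-(α/2)-1)) := by
            field_simp
          exact heq ▸ hthis
        · intro x hx
          have hx2 : ∀ y ∈ Ioo (0:ℝ) r, 1 - y^2 ≠ 0 := by
            intro y hy; nlinarith [hy.1, hy.2]
          exact (continuousOn_const.mul (continuousOn_id.mul
            (rpow_cont (-(α/2)-1) 0 r hx2))) x hx
        · intro x hx
          have hx2 : (0:ℝ) < 1 - x^2 := by nlinarith [hx.1, hx.2]
          exact mul_nonneg hr0.le
            (mul_nonneg hx.1.le (Real.rpow_pos_of_pos hx2 _).le)
        · intro x hx y hy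
          obtain ⟨hx0, hxr⟩ := hx
          obtain ⟨hy0, hyr⟩ := hy
          have hx2 : (0:ℝ) < 1 - x^2 := by nlinarith
          have hy2 : (0:ℝ) < 1 - y^2 := by nlinarith
          have h1 : (1-y^2)^(-(α/2)) ≤ (1-r^2)^(-(α/2)) :=
            Real.rpow_le_rpow_of_nonpos hr2 (by nlinarith) (by linarith)
          have h2 : (0:ℝ) ≤ (1-x^2)^(-(α/2)) := (Real.rpow_pos_of_pos hx2 _).le
          have h3 : (0:ℝ) < r/α := by positivity
          calc r/α * (1-y^2)^(-(α/2)) - r/α * (1-x^2)^(-(α/2))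
              ≤ r/α * (1-r^2)^(-(α/2)) := by nlinarith
            _ = 1/α * (r * (1-r^2)^(-(α/2))) := by ring
  have hB : ∫⁻ s in Ico r (1:ℝ), ker s r * ENNReal.ofReal ((1-s^2) ^ (α/2-1)) *
        ENNReal.ofReal ((1-s^2) ^ (1-α) * s) ≤
      ENNReal.ofReal (4 * (r * (1-r^2) ^ (-(α/2)))) := by
    rw [setLIntegral_congr (Ioo_ae_eq_Ico (a := r) (b := (1:ℝ))).symm]
    rw [setLIntegral_congr_fun_ae measurableSet_Ioo (ae_of_all _ (fun s hs => ?_))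
      (g := fun s => ENNReal.ofReal ((2*r/(1-r^2)) * (1-s^2)^(-(α/2))))]
    swap
    · obtain ⟨hsr, hs1⟩ := hs
      have hs0 : 0 < s := hr0.trans hsr
      have hs2 : (0:ℝ) < 1 - s^2 := by nlinarith
      rw [ker, if_pos hsr.le, ← ENNReal.ofReal_mul
        (div_nonneg (by linarith) (by positivity)), ← ENNReal.ofReal_mul
        (mul_nonneg (div_nonneg (by linarith) (by positivity))
          (Real.rpow_pos_of_pos hs2 _).le)]
      congr 1
      have e1 : (1-s^2)^(α/2-1) * (1-s^2)^(1-α) = (1-s^2)^(-(α/2)) := by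
        rw [← Real.rpow_add hs2]
        congr 1
        ring
      calc 2*r/(s*(1-r^2)) * (1-s^2)^(α/2-1) * ((1-s^2)^(1-α) * s)
          = (2*r*s/(s*(1-r^2))) * ((1-s^2)^(α/2-1) * (1-s^2)^(1-α)) := by ring
        _ = (2*r/(1-r^2)) * (1-s^2)^(-(α/2)) := by
            rw [e1]
            congr 1
            field_simp
    · refine le_trans (setLIntegral_mono' measurableSet_Ioo
        (fun s hs => ENNReal.ofReal_le_ofReal ?_)
        (g := fun s => ENNReal.ofReal ((2*r/(1-r^2)) * (1-s)^(-(α/2))))) ?_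
      · obtain ⟨hsr, hs1⟩ := hs
        have hs0 : 0 < s := hr0.trans hsr
        have hs2 : (0:ℝ) < 1 - s := by linarith
        have hkey : (1-s^2)^(-(α/2)) ≤ (1-s)^(-(α/2)) :=
          Real.rpow_le_rpow_of_nonpos hs2 (by nlinarith) (by linarith)
        exact mul_le_mul_of_nonneg_left hkey
          (div_nonneg (by linarith) hr2.le)
      · apply lint_le (hr1) (fun s => -((2*r/(1-r^2)) * (1-s)^(1-α/2))/(1-α/2))
        · fun_prop
        · intro x hx
          obtain ⟨hxr, hx1⟩ := hx
          have hx2 : (0:ℝ) < 1 - x := by linarith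
          have hthis := (((hdb (1-α/2) x hx2.ne').const_mul (2*r/(1-r^2))).neg).div_const (1-α/2)
          rw [show (1-α/2-1 : ℝ) = -(α/2) by ring] at hthis
          have heq : -(2*r/(1-r^2) * ((1-α/2) * (1-x)^(-(α/2)) * (-1)))/(1-α/2)
              = 2*r/(1-r^2) * (1-x)^(-(α/2)) := by
            rw [div_eq_iff hβ.ne']
            ring
          exact heq ▸ hthis
        · intro x hx
          have hb : Continuous fun y : ℝ => 1 - y := by fun_prop
          exact (continuousOn_const.mul (fun y hy =>
            (hb.continuousAt.rpow_const
              (Or.inl (sub_ne_zero.mpr (ne_of_gt hy.2)))).continuousWithinAt)) x hx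
        · intro x hx
          have hx2 : (0:ℝ) < 1 - x := by linarith [hx.2]
          exact mul_nonneg (div_nonneg (by linarith) hr2.le)
            (Real.rpow_pos_of_pos hx2 _).le
        · intro x hx y hy
          obtain ⟨hxr, hx1⟩ := hx
          obtain ⟨hyr, hy1⟩ := hy
          have hx2 : (0:ℝ) < 1 - x := by linarith
          have hy2 : (0:ℝ) < 1 - y := by linarith
          have hC : (0:ℝ) ≤ 2*r/(1-r^2) := div_nonneg (by linarith) hr2.le
          rw [div_sub_div_same, div_le_iff₀ hβ]
          have h1 : (1-x)^(1-α/2) ≤ (1-r)^(1-α/2) :=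
            Real.rpow_le_rpow hx2.le (by linarith) (by linarith)
          have h2 : (0:ℝ) ≤ (1-y)^(1-α/2) := (Real.rpow_pos_of_pos hy2 _).le
          have h3 : (1-r)^(1-α/2) ≤ (1-r^2)^(1-α/2) :=
            Real.rpow_le_rpow (by linarith) (by nlinarith) (by linarith)
          have h4 : (1-r^2)^(1-α/2) = (1-r^2)^(-(α/2)) * (1-r^2) := by
            have h := Real.rpow_add_one hr2.ne' (-(α/2))
            rw [show (-(α/2)+1 : ℝ) = 1-α/2 by ring] at h
            exact h
          have h5 : (0:ℝ) < (1-r^2)^(-(α/2)) := Real.rpow_pos_of_pos hr2 _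
          have key : -(2*r/(1-r^2) * (1-y)^(1-α/2)) - -(2*r/(1-r^2) * (1-x)^(1-α/2))
              ≤ 2*r/(1-r^2) * (1-r^2)^(1-α/2) := by nlinarith
          calc -(2*r/(1-r^2) * (1-y)^(1-α/2)) - -(2*r/(1-r^2) * (1-x)^(1-α/2))
              ≤ 2*r/(1-r^2) * (1-r^2)^(1-α/2) := key
            _ = 2*r * (1-r^2)^(-(α/2)) := by rw [h4]; field_simp
            _ ≤ 4 * (r * (1-r^2)^(-(α/2))) * (1-α/2) := by
                nlinarith [mul_pos hr0 h5, mul_le_mul_of_nonneg_left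
                  (show (1:ℝ) ≤ 2-α by linarith) (mul_pos hr0 h5).le]
  refine le_trans (add_le_add hA hB) ?_
  have h5 : (0:ℝ) < (1-r^2)^(-(α/2)) := Real.rpow_pos_of_pos hr2 _
  rw [← ENNReal.ofReal_add (by positivity) (by positivity)]
  apply ENNReal.ofReal_le_ofReal
  have h6 : (1/α + 4) ≤ 5/α := by
    rw [div_add' _ _ _ hα0.ne', div_le_div_iff₀ hα0 hα0]
    nlinarith
  nlinarith [mul_le_mul_of_nonneg_right h6 (mul_nonneg hr0.le h5.le)]

lemma CSlin {μ : Measure ℝ} (K P G : ℝ → ℝ≥0∞) (hK : Measurable K)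
    (hP : Measurable P) (hG : Measurable G)
    (hP0 : ∀ᵐ r ∂μ, P r ≠ 0 ∧ P r ≠ ⊤) :
    (∫⁻ r, K r * G r ∂μ)^2 ≤
      (∫⁻ r, K r * P r ∂μ) * (∫⁻ r, K r * ((P r)⁻¹ * G r^2) ∂μ) := by
  set u : ℝ → ℝ≥0∞ := fun r => (K r * P r) ^ (1/2 : ℝ) with hu
  set v : ℝ → ℝ≥0∞ := fun r => (K r * ((P r)⁻¹ * G r^2)) ^ (1/2 : ℝ) with hv
  have hae : ∀ᵐ r ∂μ, K r * G r = u r * v r := by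
    refine hP0.mono fun r ⟨h0, ht⟩ => ?_
    rw [hu, hv]
    simp only []
    rw [← ENNReal.mul_rpow_of_nonneg _ _ (by norm_num : (0:ℝ) ≤ 1/2)]
    have hin : K r * P r * (K r * ((P r)⁻¹ * G r^2)) = (K r * G r)^2 := by
      calc K r * P r * (K r * ((P r)⁻¹ * G r^2))
          = (P r * (P r)⁻¹) * ((K r * G r) * (K r * G r)) := by ring
        _ = (K r * G r)^2 := by
            rw [ENNReal.mul_inv_cancel h0 ht, one_mul, ← pow_two]
    rw [hin, ← ENNReal.rpow_natCast (K r * G r) 2, ← ENNReal.rpow_mul]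
    norm_num
  rw [lintegral_congr_ae hae]
  have hpq : (2:ℝ).HolderConjugate 2 := Real.HolderConjugate.two_two
  have humeas : Measurable u := (hK.mul hP).pow measurable_const
  have hvmeas : Measurable v := (hK.mul ((hP.inv).mul (hG.pow measurable_const))).pow
    measurable_const
  have hH := ENNReal.lintegral_mul_le_Lp_mul_Lq μ hpq humeas.aemeasurable hvmeas.aemeasurable
  have hu2 : ∀ r, u r ^ (2:ℝ) = K r * P r := fun r => by
    rw [hu]
    simp only []
    rw [← ENNReal.rpow_mul]
    norm_num
  have hv2 : ∀ r, v r ^ (2:ℝ) = K r * ((P r)⁻¹ * G r^2) := fun r => by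
    rw [hv]
    simp only []
    rw [← ENNReal.rpow_mul]
    norm_num
  simp only [Pi.mul_apply] at hH
  rw [show (fun r => u r ^ (2:ℝ)) = fun r => K r * P r from funext hu2,
    show (fun r => v r ^ (2:ℝ)) = fun r => K r * ((P r)⁻¹ * G r^2) from funext hv2] at hH
  set A := ∫⁻ r, K r * P r ∂μ
  set B := ∫⁻ r, K r * ((P r)⁻¹ * G r^2) ∂μ
  calc (∫⁻ r, u r * v r ∂μ)^2
      ≤ (A ^ (1/(2:ℝ)) * B ^ (1/(2:ℝ)))^2 := by
        rw [pow_two, pow_two]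
        exact mul_le_mul' hH hH
    _ = (A ^ (1/(2:ℝ)) * A ^ (1/(2:ℝ))) * (B ^ (1/(2:ℝ)) * B ^ (1/(2:ℝ))) := by ring
    _ = A * B := by
        rw [← ENNReal.rpow_add_of_nonneg _ _ (by norm_num) (by norm_num),
          ← ENNReal.rpow_add_of_nonneg _ _ (by norm_num) (by norm_num)]
        norm_num

set_option maxHeartbeats 2000000 in
theorem stmt12 (α : ℝ) (hα0 : 0 < α) (hα1 : α < 1) (l : ℤ) (hl : l ≤ 0)
    (f : ℝ → ℂ) (hf : Measurable f)
    (hf2 : (∫⁻ r in Ioo (0:ℝ) 1,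
        (‖f r‖₊ : ℝ≥0∞)^2 * ENNReal.ofReal ((1 - r^2) ^ (1 - α) * r)) < ⊤) :
    ∫⁻ s in Ioo (0:ℝ) 1,
        (‖Tl l f s‖₊ : ℝ≥0∞)^2 * ENNReal.ofReal ((1 - s^2) ^ (1 - α) * s)
      ≤ ENNReal.ofReal ((8 / α^2)^2) *
        ∫⁻ r in Ioo (0:ℝ) 1,
          (‖f r‖₊ : ℝ≥0∞)^2 * ENNReal.ofReal ((1 - r^2) ^ (1 - α) * r) := by
  have hI : MeasurableSet (Ioo (0:ℝ) 1) := measurableSet_Ioo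
  set g : ℝ → ℝ≥0∞ := fun r => (‖f r‖₊ : ℝ≥0∞) with hgdef
  set p : ℝ → ℝ≥0∞ := fun x => ENNReal.ofReal ((1-x^2)^(α/2-1)) with hpdef
  set w : ℝ → ℝ≥0∞ := fun x => ENNReal.ofReal ((1-x^2)^(1-α) * x) with hwdef
  have hgm : Measurable g := hf.nnnorm.coe_nnreal_ennreal
  have hpm : Measurable p := by rw [hpdef]; fun_prop
  have hwm : Measurable w := by rw [hwdef]; fun_prop
  have hker1 : ∀ s, Measurable (ker s) := by
    intro s
    have : ker s = fun r => if r ≤ s then ENNReal.ofReal (2*r/(s*(1-r^2)))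
        else ENNReal.ofReal (r*s/(1-s^2)) := rfl
    rw [this]
    exact Measurable.ite (measurableSet_le measurable_id measurable_const)
      (by fun_prop) (by fun_prop)
  have hker2 : Measurable (fun q : ℝ × ℝ => ker q.1 q.2) := by
    have : (fun q : ℝ × ℝ => ker q.1 q.2) = fun q : ℝ × ℝ =>
        if q.2 ≤ q.1 then ENNReal.ofReal (2*q.2/(q.1*(1-q.2^2)))
        else ENNReal.ofReal (q.2*q.1/(1-q.1^2)) := rfl
    rw [this]
    exact Measurable.ite (measurableSet_le measurable_snd measurable_fst)
      (by fun_prop) (by fun_prop)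
  have hp_pos : ∀ r ∈ Ioo (0:ℝ) 1, p r ≠ 0 ∧ p r ≠ ⊤ := by
    intro r hr
    have hr2 : (0:ℝ) < 1 - r^2 := by nlinarith [hr.1, hr.2]
    exact ⟨(ENNReal.ofReal_pos.mpr (Real.rpow_pos_of_pos hr2 _)).ne',
      ENNReal.ofReal_ne_top⟩
  calc ∫⁻ s in Ioo (0:ℝ) 1, (‖Tl l f s‖₊ : ℝ≥0∞)^2 * w s
      ≤ ∫⁻ s in Ioo (0:ℝ) 1, ENNReal.ofReal (3/α) *
          ((p s * w s) * (∫⁻ r in Ioo (0:ℝ) 1, ker s r * ((p r)⁻¹ * g r^2))) := by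
        apply setLIntegral_mono' hI
        intro s hsI
        have h1 := step1 l hl f s hsI
        have h2 : (‖Tl l f s‖₊ : ℝ≥0∞)^2 ≤
            (∫⁻ r in Ioo (0:ℝ) 1, ker s r * g r)^2 := by
          rw [pow_two, pow_two]; exact mul_le_mul' h1 h1
        have h3 := CSlin (μ := volume.restrict (Ioo (0:ℝ) 1)) (ker s) p g
          (hker1 s) hpm hgm
          (ae_restrict_of_forall_mem hI hp_pos)
        have h4 : (∫⁻ r in Ioo (0:ℝ) 1, ker s r * p r) ≤
            ENNReal.ofReal (3/α) * p s := by
          refine le_trans (cond1 α hα0 hα1 s hsI) ?_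
          rw [hpdef]
          rw [ENNReal.ofReal_mul (by positivity)]
        calc (‖Tl l f s‖₊ : ℝ≥0∞)^2 * w s
            ≤ ((∫⁻ r in Ioo (0:ℝ) 1, ker s r * p r) *
                (∫⁻ r in Ioo (0:ℝ) 1, ker s r * ((p r)⁻¹ * g r^2))) * w s :=
              mul_le_mul_left (h2.trans h3) _
          _ ≤ ((ENNReal.ofReal (3/α) * p s) *
                (∫⁻ r in Ioo (0:ℝ) 1, ker s r * ((p r)⁻¹ * g r^2))) * w s :=
              mul_le_mul_left (mul_le_mul_left h4 _) _
          _ = ENNReal.ofReal (3/α) *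
                ((p s * w s) * (∫⁻ r in Ioo (0:ℝ) 1, ker s r * ((p r)⁻¹ * g r^2))) := by
              ring
    _ = ENNReal.ofReal (3/α) * ∫⁻ s in Ioo (0:ℝ) 1, ∫⁻ r in Ioo (0:ℝ) 1,
          (p s * w s) * (ker s r * ((p r)⁻¹ * g r^2)) := by
        rw [← lintegral_const_mul' _ _ ENNReal.ofReal_ne_top]
        refine lintegral_congr fun s => ?_
        rw [← lintegral_const_mul' _ _
          (ENNReal.mul_ne_top ENNReal.ofReal_ne_top ENNReal.ofReal_ne_top)]
    _ = ENNReal.ofReal (3/α) * ∫⁻ r in Ioo (0:ℝ) 1, ∫⁻ s in Ioo (0:ℝ) 1,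
          (p s * w s) * (ker s r * ((p r)⁻¹ * g r^2)) := by
        congr 1
        apply lintegral_lintegral_swap
        apply Measurable.aemeasurable
        exact (((hpm.comp measurable_fst).mul (hwm.comp measurable_fst)).mul
          (hker2.mul (((hpm.comp measurable_snd).inv).mul
            ((hgm.comp measurable_snd).pow measurable_const))))
    _ ≤ ENNReal.ofReal (3/α) * ∫⁻ r in Ioo (0:ℝ) 1,
          ENNReal.ofReal (5/α) * (g r^2 * w r) := by
        apply mul_le_mul_right
        apply setLIntegral_mono' hI
        intro r hrI
        have hr2 : (0:ℝ) < 1 - r^2 := by nlinarith [hrI.1, hrI.2]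
        have hCne : ((p r)⁻¹ * g r^2) ≠ ⊤ := by
          apply ENNReal.mul_ne_top
          · exact ENNReal.inv_ne_top.mpr (hp_pos r hrI).1
          · exact ENNReal.pow_ne_top ENNReal.coe_ne_top
        have hre : ∫⁻ s in Ioo (0:ℝ) 1, (p s * w s) * (ker s r * ((p r)⁻¹ * g r^2))
            = ((p r)⁻¹ * g r^2) * ∫⁻ s in Ioo (0:ℝ) 1, ker s r * p s * w s := by
          rw [← lintegral_const_mul' _ _ hCne]
          refine lintegral_congr fun s => ?_
          ring
        rw [hre]
        have h5 := cond2 α hα0 hα1 r hrI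
        refine le_trans (mul_le_mul_right h5 _) (le_of_eq ?_)
        have hp_inv : (p r)⁻¹ = ENNReal.ofReal ((1-r^2)^(1-α/2)) := by
          rw [hpdef]
          simp only []
          rw [← ENNReal.ofReal_inv_of_pos (Real.rpow_pos_of_pos hr2 _)]
          congr 1
          have h := Real.rpow_neg hr2.le (α/2-1)
          rw [show (-(α/2-1) : ℝ) = 1-α/2 by ring] at h
          rw [← h]
        rw [hp_inv, hwdef, hgdef]
        simp only []
        rw [mul_comm (ENNReal.ofReal ((1-r^2)^(1-α/2))) ((‖f r‖₊ : ℝ≥0∞)^2),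
          mul_assoc, ← ENNReal.ofReal_mul (Real.rpow_pos_of_pos hr2 _).le]
        have h6 : (1-r^2)^(1-α/2) * ((5/α) * (r * (1-r^2)^(-(α/2))))
            = (5/α) * ((1-r^2)^(1-α) * r) := by
          have h7 : (1-r^2)^(1-α/2) * (1-r^2)^(-(α/2)) = (1-r^2)^(1-α) := by
            rw [← Real.rpow_add hr2]
            congr 1
            ring
          calc (1-r^2)^(1-α/2) * ((5/α) * (r * (1-r^2)^(-(α/2))))
              = (5/α) * (((1-r^2)^(1-α/2) * (1-r^2)^(-(α/2))) * r) := by ring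
            _ = (5/α) * ((1-r^2)^(1-α) * r) := by rw [h7]
        rw [h6, ENNReal.ofReal_mul (by positivity)]
        ring
    _ = ENNReal.ofReal (15/α^2) * ∫⁻ r in Ioo (0:ℝ) 1, g r^2 * w r := by
        rw [lintegral_const_mul' _ _ ENNReal.ofReal_ne_top, ← mul_assoc,
          ← ENNReal.ofReal_mul (by positivity)]
        congr 2
        field_simp
        ring
    _ ≤ ENNReal.ofReal ((8 / α^2)^2) * ∫⁻ r in Ioo (0:ℝ) 1, g r^2 * w r := by
        apply mul_le_mul_left
        apply ENNReal.ofReal_le_ofReal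
        rw [div_pow, div_le_div_iff₀ (by positivity) (by positivity)]
        nlinarith [sq_nonneg α, mul_le_mul_of_nonneg_left
          (show α^2 ≤ 1 by nlinarith) (sq_nonneg α)]
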